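/- Let O be a 2×2 complex matrix such that O² is unitary (i.e., (O†)²O² = I). Then either O is unitary, or there exist orthonormal vectors v₁, v₂ ∈ ℂ² and scalars a, b ∈ ℂ with |a|·|b| = 1 and |a| ≠ 1 such that O = a|v₁⟩⟨v₂| + b|v₂⟩⟨v₁|. -/

import Mathlib

open Matrix

/-- The rank-one operator |v⟩⟨w| : u ↦ ⟨w,u⟩ v, as a matrix. -/
noncomputable def outer (v w : Fin 2 → ℂ) : Matrix (Fin 2) (Fin 2) ℂ :=
  Matrix.vecMulVec v (star w)

lemma outer_mulVec (v w u : Fin 2 → ℂ) :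
    outer v w *ᵥ u = (dotProduct (star w) u) • v := by
  ext i
  simp only [outer, mulVec, dotProduct, vecMulVec_apply, Pi.smul_apply, smul_eq_mul,
    Finset.sum_mul]
  exact Finset.sum_congr rfl fun k _ => by ring

lemma mul_outer (A : Matrix (Fin 2) (Fin 2) ℂ) (v w : Fin 2 → ℂ) :
    A * outer v w = outer (A *ᵥ v) w := by
  ext i j
  simp only [outer, mul_apply, vecMulVec_apply, mulVec, dotProduct, Finset.sum_mul]
  exact Finset.sum_congr rfl fun k _ => by ring

lemma outer_smul (c : ℂ) (v w : Fin 2 → ℂ) : outer (c • v) w = c • outer v w := by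
  ext i j
  simp only [outer, vecMulVec_apply, Pi.smul_apply, smul_eq_mul, Matrix.smul_apply]
  ring

lemma dot_conj (x y : Fin 2 → ℂ) :
    star (dotProduct (star x) y) = dotProduct (star y) x := by
  simp only [dotProduct, star_sum, Pi.star_apply]
  refine Finset.sum_congr rfl fun k _ => ?_
  rw [StarMul.star_mul, star_star]

lemma key (A : Matrix (Fin 2) (Fin 2) ℂ) (x y : Fin 2 → ℂ) :
    dotProduct (star (A *ᵥ x)) y = dotProduct (star x) (Aᴴ *ᵥ y) := by
  rw [star_mulVec, dotProduct_mulVec]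

lemma outer_complete (v w : Fin 2 → ℂ) (hv : dotProduct (star v) v = 1)
    (hw : dotProduct (star w) w = 1) (hvw : dotProduct (star v) w = 0) :
    outer v v + outer w w = 1 := by
  have hwv : dotProduct (star w) v = 0 := by rw [← dot_conj, hvw, star_zero]
  set B : Matrix (Fin 2) (Fin 2) ℂ := Matrix.of ![star v, star w] with hBdef
  simp only [dotProduct, Fin.sum_univ_two, Pi.star_apply, Complex.star_def] at hv hw hvw hwv
  have hB : B * Bᴴ = 1 := by
    ext i j
    fin_cases i <;> fin_cases j <;>
      simp [hBdef, mul_apply, Fin.sum_univ_two, conjTranspose_apply, Complex.star_def] <;>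
      first
        | linear_combination hv
        | linear_combination hw
        | linear_combination hvw
        | linear_combination hwv
  have hB2 : Bᴴ * B = 1 := mul_eq_one_comm.mp hB
  rw [← hB2]
  ext i j
  fin_cases i <;> fin_cases j <;>
    simp [outer, hBdef, mul_apply, Fin.sum_univ_two, conjTranspose_apply, vecMulVec_apply,
      mul_comm]

/-- If O is a 2×2 matrix with O² unitary, then either O is unitary, or
O = a|v₁⟩⟨v₂| + b|v₂⟩⟨v₁| for orthonormal v₁, v₂ and scalars a, b with |a||b| = 1,
|a| ≠ 1. -/
theorem stmt7 (O : Matrix (Fin 2) (Fin 2) ℂ)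
    (h : (Oᴴ * Oᴴ) * (O * O) = 1) :
    Oᴴ * O = 1 ∨
      ∃ (v₁ v₂ : Fin 2 → ℂ) (a b : ℂ),
        dotProduct (star v₁) v₁ = 1 ∧ dotProduct (star v₂) v₂ = 1 ∧
        dotProduct (star v₁) v₂ = 0 ∧
        ‖a‖ * ‖b‖ = 1 ∧ ‖a‖ ≠ 1 ∧
        O = a • outer v₁ v₂ + b • outer v₂ v₁ := by
  -- O is invertible
  have hdet : IsUnit O.det := by
    have h1 := congrArg det h
    simp only [det_mul, det_one, det_conjTranspose] at h1
    exact IsUnit.of_mul_eq_one _ (show O.det * (star O.det * star O.det * O.det) = 1 by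
      rw [← h1]; ring)
  have hO1 : O * O⁻¹ = 1 := mul_nonsing_inv O hdet
  -- Q * P = 1 and P * Q = 1
  have hQP : (O * Oᴴ) * (Oᴴ * O) = 1 := by
    have h2 : ((O * Oᴴ) * (Oᴴ * O)) * O = O := by
      calc ((O * Oᴴ) * (Oᴴ * O)) * O = O * ((Oᴴ * Oᴴ) * (O * O)) := by
            simp only [Matrix.mul_assoc]
        _ = O := by rw [h, Matrix.mul_one]
    have h3 := congrArg (· * O⁻¹) h2
    simpa only [Matrix.mul_assoc, hO1, Matrix.mul_one] using h3
  have hPQ : (Oᴴ * O) * (O * Oᴴ) = 1 := mul_eq_one_comm.mp hQP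
  by_cases hu : Oᴴ * O = 1
  · exact Or.inl hu
  right
  have hP : (Oᴴ * O).IsHermitian := isHermitian_conjTranspose_mul_self O
  have hQ : (O * Oᴴ).IsHermitian := isHermitian_mul_conjTranspose_self O
  -- find eigenvalue ≠ 1
  obtain ⟨i, hi⟩ : ∃ i, hP.eigenvalues i ≠ 1 := by
    by_contra hc
    push_neg at hc
    apply hu
    have hd : (RCLike.ofReal ∘ hP.eigenvalues : Fin 2 → ℂ) = fun _ => 1 :=
      funext fun j => by simp [hc j]
    have := hP.spectral_theorem
    rw [hd] at this
    rw [this, Matrix.diagonal_one, map_one]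
  set μ : ℝ := hP.eigenvalues i with hμdef
  have hμ0 : 0 ≤ μ := eigenvalues_conjTranspose_mul_self_nonneg O i
  set w : Fin 2 → ℂ := ⇑(hP.eigenvectorBasis i) with hwdef
  have hPw : (Oᴴ * O) *ᵥ w = (μ : ℂ) • w := by
    rw [hwdef, hP.mulVec_eigenvectorBasis i]
    ext k
    simp [Complex.real_smul]
    exact Or.inl rfl
  have hwnorm : dotProduct (star w) w = 1 := by
    have horth := orthonormal_iff_ite.mp hP.eigenvectorBasis.orthonormal
    have h5 := horth i i
    simp only [if_pos rfl, EuclideanSpace.inner_eq_star_dotProduct] at h5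
    rw [dotProduct_comm, if_pos trivial] at h5
    exact h5
  -- μ ≠ 0
  have hμne : μ ≠ 0 := by
    intro h0
    have hw0 : w = 0 := by
      have : ((O * Oᴴ) * (Oᴴ * O)) *ᵥ w = w := by rw [hQP, one_mulVec]
      rw [← mulVec_mulVec, hPw, h0] at this
      simpa using this.symm
    rw [hw0] at hwnorm
    simpa using hwnorm
  have hμpos : 0 < μ := lt_of_le_of_ne hμ0 (Ne.symm hμne)
  have hμC : (μ : ℂ) ≠ 0 := by exact_mod_cast hμne
  set u : Fin 2 → ℂ := O *ᵥ w with hudef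
  have huu : dotProduct (star u) u = (μ : ℂ) := by
    rw [hudef, key, mulVec_mulVec, hPw, dotProduct_smul, hwnorm, smul_eq_mul, mul_one]
  have hQu : (O * Oᴴ) *ᵥ u = (μ : ℂ) • u := by
    rw [hudef, mulVec_mulVec, show O * Oᴴ * O = O * (Oᴴ * O) by rw [Matrix.mul_assoc],
      ← mulVec_mulVec, hPw, mulVec_smul]
  have hQw : (O * Oᴴ) *ᵥ w = (μ : ℂ)⁻¹ • w := by
    have h6 : (μ : ℂ) • ((O * Oᴴ) *ᵥ w) = w := by
      calc (μ : ℂ) • ((O * Oᴴ) *ᵥ w) = (O * Oᴴ) *ᵥ ((μ : ℂ) • w) := (mulVec_smul _ _ _).symm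
        _ = (O * Oᴴ) *ᵥ ((Oᴴ * O) *ᵥ w) := by rw [hPw]
        _ = ((O * Oᴴ) * (Oᴴ * O)) *ᵥ w := mulVec_mulVec _ _ _
        _ = w := by rw [hQP, one_mulVec]
    have h7 : (O * Oᴴ) *ᵥ w = (μ : ℂ)⁻¹ • ((μ : ℂ) • ((O * Oᴴ) *ᵥ w)) := by
      rw [smul_smul, inv_mul_cancel₀ hμC, one_smul]
    rw [h7, h6]
  -- orthogonality
  have hc : dotProduct (star u) w = 0 := by
    have e1 : dotProduct (star u) ((O * Oᴴ) *ᵥ w) = (μ : ℂ)⁻¹ * dotProduct (star u) w := by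
      rw [hQw, dotProduct_smul, smul_eq_mul]
    have e2 : dotProduct (star u) ((O * Oᴴ) *ᵥ w) = (μ : ℂ) * dotProduct (star u) w := by
      conv_lhs => rw [← hQ.eq, ← key, hQu]
      rw [star_smul, smul_dotProduct, smul_eq_mul, Complex.star_def, Complex.conj_ofReal]
    have hμμ : (μ : ℂ) ≠ (μ : ℂ)⁻¹ := by
      intro hE
      have hE2 : μ = μ⁻¹ := by exact_mod_cast hE
      have hE3 : μ * μ = 1 := by field_simp [hμne] at hE2; nlinarith [hE2]
      rcases lt_or_gt_of_ne hi with h7 | h7 <;> nlinarith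
    have h8 := e2.symm.trans e1
    by_contra hcne
    exact hμμ (mul_right_cancel₀ hcne h8)
  -- the vector v₁
  set a : ℂ := ((Real.sqrt μ : ℝ) : ℂ) with hadef
  have hsq : Real.sqrt μ ≠ 0 := by positivity
  have ha : a ≠ 0 := by rw [hadef, Ne, Complex.ofReal_eq_zero]; exact hsq
  have haa : a * a = (μ : ℂ) := by
    rw [hadef, ← Complex.ofReal_mul, Real.mul_self_sqrt hμ0]
  have hstara : star a = a := by rw [hadef, Complex.star_def, Complex.conj_ofReal]
  set v₁ : Fin 2 → ℂ := a⁻¹ • u with hv₁def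
  have hstarv₁ : star v₁ = a⁻¹ • star u := by
    rw [hv₁def, star_smul, star_inv₀, hstara]
  have hv₁norm : dotProduct (star v₁) v₁ = 1 := by
    rw [hstarv₁, hv₁def, smul_dotProduct, dotProduct_smul, huu, smul_eq_mul, smul_eq_mul, ← haa]
    field_simp
  have hv₁w : dotProduct (star v₁) w = 0 := by
    rw [hstarv₁, smul_dotProduct, hc, smul_zero]
  have hwv₁ : dotProduct (star w) v₁ = 0 := by
    rw [← dot_conj, hv₁w, star_zero]
  have hav₁ : a • v₁ = u := by
    rw [hv₁def, smul_smul, mul_inv_cancel₀ ha, one_smul]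
  -- O *ᵥ v₁ is orthogonal to v₁
  have hOv₁ : dotProduct (star v₁) (O *ᵥ v₁) = 0 := by
    have d0 : dotProduct (star (O *ᵥ v₁)) u = 0 := by
      rw [hudef, key, mulVec_mulVec, hPw, dotProduct_smul, hv₁w, smul_zero]
    rw [← hav₁, dotProduct_smul, smul_eq_mul] at d0
    have inner0 : dotProduct (star (O *ᵥ v₁)) v₁ = 0 :=
      (mul_eq_zero.mp d0).resolve_left ha
    rw [← dot_conj, inner0, star_zero]
  have hC : outer w w + outer v₁ v₁ = 1 := outer_complete w v₁ hwnorm hv₁norm hwv₁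
  set b : ℂ := dotProduct (star w) (O *ᵥ v₁) with hbdef
  have hbw : O *ᵥ v₁ = b • w := by
    have h9 : O *ᵥ v₁ = (outer w w + outer v₁ v₁) *ᵥ (O *ᵥ v₁) := by rw [hC, one_mulVec]
    rw [h9, add_mulVec, outer_mulVec, outer_mulVec, hOv₁, zero_smul, add_zero, hbdef]
  have hPv₁ : (Oᴴ * O) *ᵥ v₁ = (μ : ℂ)⁻¹ • v₁ := by
    have hPu : (Oᴴ * O) *ᵥ u = (μ : ℂ)⁻¹ • u := by
      have h10 : (μ : ℂ) • ((Oᴴ * O) *ᵥ u) = u := by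
        calc (μ : ℂ) • ((Oᴴ * O) *ᵥ u) = (Oᴴ * O) *ᵥ ((μ : ℂ) • u) := (mulVec_smul _ _ _).symm
          _ = (Oᴴ * O) *ᵥ ((O * Oᴴ) *ᵥ u) := by rw [hQu]
          _ = ((Oᴴ * O) * (O * Oᴴ)) *ᵥ u := mulVec_mulVec _ _ _
          _ = u := by rw [hPQ, one_mulVec]
      have h11 : (Oᴴ * O) *ᵥ u = (μ : ℂ)⁻¹ • ((μ : ℂ) • ((Oᴴ * O) *ᵥ u)) := by
        rw [smul_smul, inv_mul_cancel₀ hμC, one_smul]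
      rw [h11, h10]
    rw [hv₁def, mulVec_smul, hPu, smul_comm]
  have e3 : dotProduct (star (O *ᵥ v₁)) (O *ᵥ v₁) = (μ : ℂ)⁻¹ := by
    rw [key, mulVec_mulVec, hPv₁, dotProduct_smul, hv₁norm, smul_eq_mul, mul_one]
  rw [hbw] at e3
  have e4 : dotProduct (star (b • w)) (b • w) = star b * b := by
    rw [star_smul, smul_dotProduct, dotProduct_smul, hwnorm]
    simp [mul_assoc]
  have hbb : star b * b = (μ : ℂ)⁻¹ := by rw [← e4]; exact e3
  have habsa : ‖a‖ = Real.sqrt μ := by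
    rw [hadef, Complex.norm_real, Real.norm_eq_abs, abs_of_nonneg (Real.sqrt_nonneg μ)]
  have hnormb : Complex.normSq b = μ⁻¹ := by
    have h13 : ((Complex.normSq b : ℝ) : ℂ) = ((μ⁻¹ : ℝ) : ℂ) := by
      calc ((Complex.normSq b : ℝ) : ℂ) = b * (starRingEnd ℂ) b := (Complex.mul_conj b).symm
        _ = star b * b := by rw [Complex.star_def, mul_comm]
        _ = (μ : ℂ)⁻¹ := hbb
        _ = ((μ⁻¹ : ℝ) : ℂ) := by push_cast; ring
    exact_mod_cast h13
  have habsb : ‖b‖ = Real.sqrt μ⁻¹ := by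
    rw [Complex.norm_def, hnormb]
  have habs : ‖a‖ * ‖b‖ = 1 := by
    rw [habsa, habsb, ← Real.sqrt_mul hμ0, mul_inv_cancel₀ hμne, Real.sqrt_one]
  have habsne : ‖a‖ ≠ 1 := by
    rw [habsa]
    intro hE
    exact hi (Real.sqrt_eq_one.mp hE)
  refine ⟨v₁, w, a, b, hv₁norm, hwnorm, hv₁w, habs, habsne, ?_⟩
  calc O = O * 1 := (Matrix.mul_one O).symm
    _ = O * (outer w w + outer v₁ v₁) := by rw [hC]
    _ = outer (O *ᵥ w) w + outer (O *ᵥ v₁) v₁ := by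
          rw [Matrix.mul_add, mul_outer, mul_outer]
    _ = a • outer v₁ w + b • outer w v₁ := by
          rw [show O *ᵥ w = a • v₁ from (hav₁.trans hudef).symm, hbw]
          rw [show outer (a • v₁) w = a • outer v₁ w from outer_smul a v₁ w,
            show outer (b • w) v₁ = b • outer w v₁ from outer_smul b w v₁]
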